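/- arXiv:2105.03080 — 2 statements merged into one kernel-verified Lean document; each statement's English description precedes it below -/
import Mathlib

section
/- Let M = H₁ × ⋯ × H_k be a direct product of groups acting on V = W₁ ⊕ ⋯ ⊕ W_k, where each W_i is a nontrivial irreducible F[H_i]-module on which H_i acts primitively, and H_j acts trivially on W_i for j ≠ i. If V = Q₁ ⊕ ⋯ ⊕ Q_ℓ is a decomposition into nonzero subspaces such that M permutes the set {Q₁,…,Q_ℓ}, then ℓ ≤ k. -/
open Module

open Module

/-- Projection maps associated to an internal direct sum decomposition. -/
lemma soi_exists_proj {F V ι : Type*} [Field F] [AddCommGroup V] [Module F V] [Fintype ι] [DecidableEq ι]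
    (A : ι → Submodule F V) (hA : DirectSum.IsInternal A) :
    ∃ P : ι → (V →ₗ[F] V),
      (∀ j v, P j v ∈ A j) ∧ (∀ v, ∑ j, P j v = v) ∧
      (∀ j, ∀ v ∈ A j, P j v = v) ∧ (∀ j j', j' ≠ j → ∀ v ∈ A j', P j v = 0) := by
  classical
  have hind := hA.submodule_iSupIndep
  have htop := hA.submodule_iSup_eq_top
  have hcompl : ∀ j, IsCompl (A j) (⨆ j', ⨆ _ : j' ≠ j, A j') := by
    intro j
    refine ⟨hind j, codisjoint_iff.2 ?_⟩
    rw [eq_top_iff, ← htop]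
    refine iSup_le fun j' => ?_
    by_cases h : j' = j
    · subst h; exact le_sup_left
    · exact le_trans (le_iSup₂ (f := fun j' (_ : j' ≠ j) => A j') j' h) le_sup_right
  refine ⟨fun j => (A j).subtype ∘ₗ Submodule.linearProjOfIsCompl (A j) _ (hcompl j),
    fun j v => (Submodule.linearProjOfIsCompl (A j) _ (hcompl j) v).2, ?_, ?_, ?_⟩
  · -- sum of projections is the identity
    have key : ∀ j, ∀ v ∈ A j,
        ∑ j', ((A j').subtype ∘ₗ Submodule.linearProjOfIsCompl (A j') _ (hcompl j')) v = v := by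
      intro j v hv
      rw [Finset.sum_eq_single j]
      · exact congrArg Subtype.val
          (Submodule.projectionOnto_apply_of_mem_left (hcompl j) hv)
      · intro j' _ hj'
        have hvc : v ∈ ⨆ j'', ⨆ _ : j'' ≠ j', A j'' :=
          le_iSup₂ (f := fun j'' (_ : j'' ≠ j') => A j'') j (Ne.symm hj') hv
        exact congrArg Subtype.val
          (Submodule.linearProjOfIsCompl_apply_right' (hcompl j') hvc)
      · simp
    intro v
    have hv : v ∈ (⊤ : Submodule F V) := trivial
    rw [← htop] at hv
    refine Submodule.iSup_induction (motive := fun v : V =>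
        ∑ j', ((A j').subtype ∘ₗ Submodule.linearProjOfIsCompl (A j') _ (hcompl j')) v = v)
      A hv key ?_ ?_
    · simp
    · intro x y hx hy
      simp only [map_add, Finset.sum_add_distrib, hx, hy]
  · intro j v hv
    exact congrArg Subtype.val
      (Submodule.projectionOnto_apply_of_mem_left (hcompl j) hv)
  · intro j j' hj' v hv
    have hvc : v ∈ ⨆ j'', ⨆ _ : j'' ≠ j, A j'' :=
      le_iSup₂ (f := fun j'' (_ : j'' ≠ j) => A j'') j' hj' hv
    exact congrArg Subtype.val
      (Submodule.linearProjOfIsCompl_apply_right' (hcompl j) hvc)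

lemma soi_proj_eq_zero {F V ι : Type*} [Field F] [AddCommGroup V] [Module F V]
    (A : ι → Submodule F V) (P : ι → V →ₗ[F] V)
    (hz : ∀ j j', j' ≠ j → ∀ v ∈ A j', P j v = 0) (S : Set ι) (j : ι) (hj : j ∉ S)
    {v : V} (hv : v ∈ ⨆ u ∈ S, A u) : P j v = 0 := by
  refine Submodule.iSup_induction (motive := fun v : V => P j v = 0)
    (fun u => ⨆ _ : u ∈ S, A u) hv ?_ (by simp) ?_
  · intro u x hx
    by_cases h : u ∈ S
    · rw [iSup_pos h] at hx
      exact hz j u (fun he => hj (he ▸ h)) x hx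
    · rw [iSup_neg h] at hx
      simp [(Submodule.mem_bot F).1 hx]
  · intro x y hx hy
    simp [map_add, hx, hy]

lemma soi_mem_biSup {F V ι : Type*} [Field F] [AddCommGroup V] [Module F V] [Fintype ι]
    (A : ι → Submodule F V) (P : ι → V →ₗ[F] V)
    (hmem : ∀ j v, P j v ∈ A j) (hsum : ∀ v, ∑ j, P j v = v)
    (S : Set ι) (v : V) (h0 : ∀ j, j ∉ S → P j v = 0) : v ∈ ⨆ u ∈ S, A u := by
  classical
  rw [← hsum v]
  refine Submodule.sum_mem _ fun j _ => ?_
  by_cases h : j ∈ S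
  · exact le_iSup₂ (f := fun u (_ : u ∈ S) => A u) j h (hmem j v)
  · rw [h0 j h]; exact zero_mem _

/-- Abstract counting lemma: if an equivalence relation on `Fin ℓ` is given, together with
pairwise-disjoint finsets of `Fin k` attached to the classes, each at least as large as its
class, then `ℓ ≤ k`. -/
lemma soi_counting {ℓ k : ℕ} (r : Fin ℓ → Fin ℓ → Prop) (hr : Equivalence r)
    (Ifin : Fin ℓ → Finset (Fin k))
    (hIr : ∀ t u, r t u → Ifin t = Ifin u)
    (hdisj : ∀ t u, ¬ r t u → Disjoint (Ifin t) (Ifin u))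
    (hcard : ∀ t (s : Finset (Fin ℓ)), (∀ u, u ∈ s ↔ r t u) → s.card ≤ (Ifin t).card) :
    ℓ ≤ k := by
  classical
  set orb : Fin ℓ → Finset (Fin ℓ) := fun t => Finset.univ.filter (fun u => r t u) with horb
  have hmem : ∀ t, t ∈ orb t := fun t => by simp [horb, hr.refl t]
  have horbeq : ∀ t u, r t u → orb t = orb u := by
    intro t u htu
    ext x; simp only [horb, Finset.mem_filter, Finset.mem_univ, true_and]
    exact ⟨fun h => hr.trans (hr.symm htu) h, fun h => hr.trans htu h⟩
  have horbr : ∀ t u, u ∈ orb t → r t u := by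
    intro t u h; simpa [horb] using h
  set 𝒪 : Finset (Finset (Fin ℓ)) := Finset.univ.image orb with hO
  have hdisjO : ∀ o1 ∈ 𝒪, ∀ o2 ∈ 𝒪, o1 ≠ o2 → Disjoint o1 o2 := by
    intro o1 h1 o2 h2 hne
    obtain ⟨t1, -, rfl⟩ := Finset.mem_image.1 h1
    obtain ⟨t2, -, rfl⟩ := Finset.mem_image.1 h2
    rw [Finset.disjoint_left]
    intro x hx1 hx2
    exact hne ((horbeq _ _ (horbr _ _ hx1)).trans (horbeq _ _ (horbr _ _ hx2)).symm)
  have hcover : Finset.univ = 𝒪.biUnion id := by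
    ext x
    simp only [Finset.mem_univ, true_iff, Finset.mem_biUnion, id]
    exact ⟨orb x, Finset.mem_image_of_mem _ (Finset.mem_univ x), hmem x⟩
  set Jhat : Finset (Fin ℓ) → Finset (Fin k) :=
    fun o => if h : ∃ t, orb t = o then Ifin h.choose else ∅ with hJ
  have hJcard : ∀ o ∈ 𝒪, o.card ≤ (Jhat o).card := by
    intro o ho
    obtain ⟨t, -, rfl⟩ := Finset.mem_image.1 ho
    have hex : ∃ u, orb u = orb t := ⟨t, rfl⟩
    have : t ∈ orb hex.choose := by rw [hex.choose_spec]; exact hmem t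
    have hIeq : Ifin hex.choose = Ifin t := hIr _ _ (horbr _ _ this)
    simp only [hJ, dif_pos hex, hIeq]
    exact hcard t _ (fun u => by simp [horb])
  have hJdisj : ∀ o1 ∈ 𝒪, ∀ o2 ∈ 𝒪, o1 ≠ o2 → Disjoint (Jhat o1) (Jhat o2) := by
    intro o1 h1 o2 h2 hne
    obtain ⟨t1, -, rfl⟩ := Finset.mem_image.1 h1
    obtain ⟨t2, -, rfl⟩ := Finset.mem_image.1 h2
    have hex1 : ∃ u, orb u = orb t1 := ⟨t1, rfl⟩
    have hex2 : ∃ u, orb u = orb t2 := ⟨t2, rfl⟩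
    have m1 : t1 ∈ orb hex1.choose := by rw [hex1.choose_spec]; exact hmem t1
    have m2 : t2 ∈ orb hex2.choose := by rw [hex2.choose_spec]; exact hmem t2
    simp only [hJ, dif_pos hex1, dif_pos hex2, hIr _ _ (horbr _ _ m1), hIr _ _ (horbr _ _ m2)]
    refine hdisj t1 t2 fun hr12 => hne ?_
    rw [← hex1.choose_spec, ← hex2.choose_spec, horbeq _ _ (horbr _ _ m1),
      horbeq _ _ (horbr _ _ m2)]
    exact horbeq t1 t2 hr12
  calc ℓ = (Finset.univ : Finset (Fin ℓ)).card := by simp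
    _ = ∑ o ∈ 𝒪, o.card := by rw [hcover]; exact Finset.card_biUnion hdisjO
    _ ≤ ∑ o ∈ 𝒪, (Jhat o).card := Finset.sum_le_sum hJcard
    _ = (𝒪.biUnion Jhat).card := (Finset.card_biUnion hJdisj).symm
    _ ≤ (Finset.univ : Finset (Fin k)).card := Finset.card_le_card (Finset.subset_univ _)
    _ = k := by simp

open Module

lemma soi_finrank_biSup {F V ι : Type*} [Field F] [AddCommGroup V] [Module F V]
    (A : ι → Submodule F V) (hind : iSupIndep A) (S : Finset ι)
    (hfd : ∀ u ∈ S, FiniteDimensional F (A u)) :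
    FiniteDimensional F ↥(⨆ u ∈ S, A u) ∧
      finrank F ↥(⨆ u ∈ S, A u) = ∑ u ∈ S, finrank F (A u) := by
  classical
  induction S using Finset.induction with
  | empty =>
    have he : (⨆ u ∈ (∅ : Finset ι), A u) = ⊥ := by simp
    rw [he]
    exact ⟨inferInstance, by rw [finrank_bot]; simp⟩
  | @insert a S ha ih =>
    have hfa : FiniteDimensional F (A a) := hfd a (Finset.mem_insert_self a S)
    obtain ⟨ihfd, ihrank⟩ := ih fun u hu => hfd u (Finset.mem_insert_of_mem hu)
    have hsup : (⨆ u ∈ insert a S, A u) = A a ⊔ ⨆ u ∈ S, A u := by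
      rw [Finset.iSup_insert]
    have hdisj : Disjoint (A a) (⨆ u ∈ S, A u) := by
      have := hind.disjoint_biSup (x := a) (y := (↑S : Set ι)) (by simpa using ha)
      simpa using this
    haveI := ihfd
    haveI : FiniteDimensional F ↥(A a ⊔ ⨆ u ∈ S, A u) := Submodule.finiteDimensional_sup _ _
    constructor
    · rw [hsup]; infer_instance
    · have key := Submodule.finrank_sup_add_finrank_inf_eq (A a) (⨆ u ∈ S, A u)
      rw [hdisj.eq_bot, finrank_bot, add_zero] at key
      rw [hsup, key, ihrank, Finset.sum_insert ha]


set_option maxHeartbeats 1000000 in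
/-- Lemma on direct products: `M = H₁ × ⋯ × H_k` acts on `V = W₁ ⊕ ⋯ ⊕ W_k` via a
representation `ρ`, with each `W_i` a nontrivial irreducible primitive `F[H_i]`-module on
which the factors `H_j` (`j ≠ i`) act trivially.  If `V = Q₁ ⊕ ⋯ ⊕ Q_ℓ` with the nonzero
subspaces `Q_t` permuted by `M`, then `ℓ ≤ k`. -/
theorem directProduct_soi_length_le (F : Type*) [Field F] (k : ℕ)
    (H : Fin k → Type*) [∀ i, Group (H i)]
    (V : Type*) [AddCommGroup V] [Module F V]
    (ρ : Representation F (∀ i, H i) V)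
    (W : Fin k → Submodule F V)
    (hint : DirectSum.IsInternal W)
    -- each `W i` is an `F[H i]`-submodule:
    (hinv : ∀ i (g : H i), (W i).map (ρ (Pi.mulSingle i g)) ≤ W i)
    -- (iii) the factors `H j`, `j ≠ i`, act trivially on `W i`:
    (htriv : ∀ i j, j ≠ i → ∀ (g : H j), ∀ v ∈ W i, ρ (Pi.mulSingle j g) v = v)
    -- (i) `W i` is a nontrivial irreducible `F[H i]`-module:
    (hnontriv : ∀ i, ∃ (g : H i), ∃ v ∈ W i, ρ (Pi.mulSingle i g) v ≠ v)
    (hirr : ∀ i (U : Submodule F V), U ≤ W i →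
      (∀ g : H i, U.map (ρ (Pi.mulSingle i g)) ≤ U) → U = ⊥ ∨ U = W i)
    -- (ii) the action of `H i` on `W i` is primitive:
    (hprim : ∀ i, ¬ ∃ (m : ℕ) (P : Fin m → Submodule F V), 1 < m ∧
      (∀ t, P t ≠ ⊥) ∧ iSupIndep P ∧ (⨆ t, P t) = W i ∧
      (∀ g : H i, ∀ t, (P t).map (ρ (Pi.mulSingle i g)) ∈ Set.range P))
    (ℓ : ℕ) (Q : Fin ℓ → Submodule F V)
    (hQint : DirectSum.IsInternal Q) (hQne : ∀ t, Q t ≠ ⊥)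
    (hQperm : ∀ (m : ∀ i, H i) (t : Fin ℓ), (Q t).map (ρ m) ∈ Set.range Q) :
    ℓ ≤ k := by
  classical
  -- projections for the two internal decompositions
  obtain ⟨PW, hPWmem, hPWsum, hPWid, hPWz⟩ := soi_exists_proj W hint
  obtain ⟨PQ, hPQmem, hPQsum, hPQid, hPQz⟩ := soi_exists_proj Q hQint
  have hWind := hint.submodule_iSupIndep
  have hQind := hQint.submodule_iSupIndep
  set e : ∀ i : Fin k, H i → (∀ j, H j) := fun i g => Pi.mulSingle i g with he
  set Cw : Fin k → Submodule F V := fun i => ⨆ j ∈ {j | j ≠ i}, W j with hCw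
  -- W i is nonzero
  have hWne : ∀ i, W i ≠ ⊥ := by
    intro i hbot
    obtain ⟨g, v, hv, hne⟩ := hnontriv i
    rw [hbot, Submodule.mem_bot] at hv
    exact hne (by rw [hv]; simp)
  -- membership in Cw i
  have hmemCw : ∀ i v, v ∈ Cw i ↔ PW i v = 0 := by
    intro i v
    constructor
    · intro hv
      exact soi_proj_eq_zero W PW hPWz {j | j ≠ i} i (by simp) hv
    · intro h0
      refine soi_mem_biSup W PW hPWmem hPWsum _ v ?_
      intro j hj
      have : j = i := by simpa using hj
      rw [this, h0]
  -- Cw i is fixed pointwise by H i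
  have hCwfix : ∀ (i : Fin k) (g : H i), ∀ v ∈ Cw i, ρ (e i g) v = v := by
    intro i g v hv
    refine Submodule.iSup_induction (motive := fun v : V => ρ (e i g) v = v)
      (fun j => ⨆ _ : j ∈ {j | j ≠ i}, W j) hv ?_ (by simp) ?_
    · intro j x hx
      by_cases h : j ∈ {j | j ≠ i}
      · rw [iSup_pos h] at hx
        exact htriv j i (Ne.symm h) g x hx
      · rw [iSup_neg h] at hx
        simp [(Submodule.mem_bot F).1 hx]
    · intro x y hx hy
      simp [map_add, hx, hy]
  -- ρ m fixes W i pointwise if the i-th coordinate of m is trivial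
  have hWfix1 : ∀ (i : Fin k) (m : ∀ j, H j), m i = 1 → ∀ v ∈ W i, ρ m v = v := by
    intro i m hmi
    have key : ∀ S : Finset (Fin k), i ∉ S → ∀ m : (∀ j, H j), (∀ j, j ∉ S → m j = 1) →
        ∀ v ∈ W i, ρ m v = v := by
      intro S
      induction S using Finset.induction with
      | empty =>
        intro _ m hm v _
        have : m = 1 := funext fun j => hm j (Finset.notMem_empty j)
        rw [this]; simp
      | @insert a S ha ih =>
        intro hiS m hm v hv
        have hia : i ≠ a := fun h => hiS (h ▸ Finset.mem_insert_self a S)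
        have hdec : m = Pi.mulSingle a (m a) * Function.update m a 1 := by
          funext j
          by_cases hj : j = a
          · subst hj; simp
          · simp [Pi.mulSingle_apply, hj, Function.update_apply]
        have hupd : ∀ j, j ∉ S → Function.update m a 1 j = 1 := by
          intro j hj
          by_cases hja : j = a
          · subst hja; simp
          · rw [Function.update_of_ne hja]
            exact hm j (by simp [hj, hja])
        have hrec := ih (fun h => hiS (Finset.mem_insert_of_mem h)) _ hupd v hv
        rw [hdec, map_mul]
        simp only [Module.End.mul_apply, hrec]
        exact htriv i a (Ne.symm hia) (m a) v hv
    intro v hv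
    refine key (Finset.univ.erase i) (Finset.notMem_erase i _) m ?_ v hv
    intro j hj
    have : j = i := by simpa using hj
    rw [this, hmi]
  -- ρ m preserves each W j
  have hWpres : ∀ (m : ∀ j, H j) (j : Fin k), (W j).map (ρ m) ≤ W j := by
    intro m j
    rintro x ⟨v, hv, rfl⟩
    have hdec : m = Pi.mulSingle j (m j) * Function.update m j 1 := by
      funext j'
      by_cases hj : j' = j
      · subst hj; simp
      · simp [Pi.mulSingle_apply, hj, Function.update_apply]
    rw [hdec, map_mul]
    simp only [Module.End.mul_apply]
    rw [hWfix1 j (Function.update m j 1) (by simp) v hv]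
    exact hinv j (m j) ⟨v, hv, rfl⟩
  have hWpres_eq : ∀ (m : ∀ j, H j) (j : Fin k), (W j).map (ρ m) = W j := by
    intro m j
    refine le_antisymm (hWpres m j) ?_
    intro v hv
    have : ρ m (ρ m⁻¹ v) = v := by
      rw [← Module.End.mul_apply, ← map_mul, mul_inv_cancel]; simp
    exact ⟨ρ m⁻¹ v, hWpres m⁻¹ j ⟨v, hv, rfl⟩, this⟩
  have hCwpres : ∀ (m : ∀ j, H j) (i : Fin k), (Cw i).map (ρ m) ≤ Cw i := by
    intro m i
    rw [hCw]
    rw [Submodule.map_iSup]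
    refine iSup_le fun j => ?_
    rw [Submodule.map_iSup]
    refine iSup_le fun hj => ?_
    rw [hWpres_eq]
    exact le_iSup₂ (f := fun j (_ : j ∈ {j | j ≠ i}) => W j) j hj
  -- moving by H i stays in W i
  have hmove : ∀ (i : Fin k) (g : H i) (v : V), ρ (e i g) v - v ∈ W i := by
    intro i g v
    have hc : v - PW i v ∈ Cw i := by
      rw [hmemCw]
      simp [map_sub, hPWid i (PW i v) (hPWmem i v)]
    have : ρ (e i g) v - v
        = ρ (e i g) (PW i v) - PW i v + (ρ (e i g) (v - PW i v) - (v - PW i v)) := by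
      simp only [map_sub]; abel
    rw [this, hCwfix i g _ hc]
    simpa using Submodule.sub_mem _ (hinv i g ⟨PW i v, hPWmem i v, rfl⟩) (hPWmem i v)
  -- PW i commutes suitably with the action
  have hPWrho : ∀ (i : Fin k) (m : ∀ j, H j), m i = 1 → ∀ v, PW i (ρ m v) = PW i v := by
    intro i m hmi v
    have hc : v - PW i v ∈ Cw i := by
      rw [hmemCw]; simp [map_sub, hPWid i (PW i v) (hPWmem i v)]
    have hd : ρ m v = PW i v + ρ m (v - PW i v) := by
      have h1 : ρ m (PW i v) = PW i v := hWfix1 i m hmi (PW i v) (hPWmem i v)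
      conv_lhs => rw [show v = PW i v + (v - PW i v) by abel]
      rw [map_add, h1]
    rw [hd, map_add, hPWid i _ (hPWmem i v),
      (hmemCw i _).1 (hCwpres m i ⟨_, hc, rfl⟩), add_zero]
  have hPWcomm : ∀ (i : Fin k) (g : H i) (v : V),
      PW i (ρ (e i g) v) = ρ (e i g) (PW i v) := by
    intro i g v
    have hc : v - PW i v ∈ Cw i := by
      rw [hmemCw]; simp [map_sub, hPWid i (PW i v) (hPWmem i v)]
    have hd : ρ (e i g) v = ρ (e i g) (PW i v) + (v - PW i v) := by
      conv_lhs => rw [show v = PW i v + (v - PW i v) by abel]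
      rw [map_add, hCwfix i g _ hc]
    rw [hd, map_add, hPWid i _ (hinv i g ⟨PW i v, hPWmem i v, rfl⟩),
      (hmemCw i _).1 hc, add_zero]
  -- the permutation action on the index set of Q
  have hQp : ∀ (m : ∀ j, H j) (t : Fin ℓ), ∃ u, Q u = (Q t).map (ρ m) := fun m t => hQperm m t
  choose s hs using hQp
  have hQinj : Function.Injective Q := by
    intro t u h
    by_contra hne
    have hd : Disjoint (Q t) (Q u) :=
      (hQind t).mono_right (le_iSup₂ (f := fun u' (_ : u' ≠ t) => Q u') u (Ne.symm hne))
    rw [h] at hd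
    exact hQne u (disjoint_self.1 hd)
  have hmapcomp : ∀ (m n : ∀ j, H j) (p : Submodule F V),
      p.map (ρ (m * n)) = (p.map (ρ n)).map (ρ m) := by
    intro m n p
    rw [map_mul, Module.End.mul_eq_comp, Submodule.map_comp]
  have hs1 : ∀ t, s 1 t = t := by
    intro t
    apply hQinj
    rw [hs 1 t, map_one]
    exact Submodule.map_id (Q t)
  have hsmul : ∀ m n t, s (m * n) t = s m (s n t) := by
    intro m n t
    apply hQinj
    rw [hs, hs, hs, hmapcomp]
  have hsinv : ∀ m t, s m⁻¹ (s m t) = t := by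
    intro m t
    rw [← hsmul, inv_mul_cancel, hs1]
  have hsinj : ∀ m, Function.Injective (s m) := by
    intro m t u h
    have := congrArg (s m⁻¹) h
    rwa [hsinv, hsinv] at this
  -- the orbit relation
  set r : Fin ℓ → Fin ℓ → Prop := fun t u => ∃ m, s m t = u with hr
  have hrequiv : Equivalence r :=
    ⟨fun t => ⟨1, hs1 t⟩,
     fun {t u} h => h.elim fun m hm => ⟨m⁻¹, by rw [← hm, hsinv]⟩,
     fun {t u w} h1 h2 => h1.elim fun m hm => h2.elim fun n hn =>
       ⟨n * m, by rw [hsmul, hm, hn]⟩⟩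
  set Vo : Fin ℓ → Submodule F V := fun t => ⨆ u ∈ {u | r t u}, Q u with hVo
  have hQleVo : ∀ t u, r t u → Q u ≤ Vo t := by
    intro t u h
    exact le_iSup₂ (f := fun u (_ : u ∈ {u | r t u}) => Q u) u h
  have hVor : ∀ t u, r t u → Vo t = Vo u := by
    intro t u h
    have : {u' | r t u'} = {u' | r u u'} := by
      ext x
      exact ⟨fun hx => hrequiv.trans (hrequiv.symm h) hx, fun hx => hrequiv.trans h hx⟩
    rw [hVo]; dsimp only; rw [this]
  have hVoinv : ∀ t (m : ∀ j, H j), (Vo t).map (ρ m) ≤ Vo t := by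
    intro t m
    rw [hVo]
    dsimp only
    rw [Submodule.map_iSup]
    refine iSup_le fun u => ?_
    rw [Submodule.map_iSup]
    refine iSup_le fun hu => ?_
    rw [← hs m u]
    exact hQleVo t (s m u) (hrequiv.trans hu ⟨m, rfl⟩)
  -- dichotomy for H i - invariant subspaces
  have hdich : ∀ (i : Fin k) (U : Submodule F V),
      (∀ g : H i, U.map (ρ (Pi.mulSingle i g)) ≤ U) → U ≤ Cw i ∨ W i ≤ U := by
    intro i U hU
    set U' : Submodule F V := ⨆ g : H i, U.map (ρ (Pi.mulSingle i g) - 1) with hU'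
    have hU'W : U' ≤ W i := by
      refine iSup_le fun g => ?_
      rintro x ⟨u, hu, rfl⟩
      simpa using hmove i g u
    have hU'U : U' ≤ U := by
      refine iSup_le fun g => ?_
      rintro x ⟨u, hu, rfl⟩
      simp only [LinearMap.sub_apply, Module.End.one_apply]
      exact Submodule.sub_mem _ (hU g ⟨u, hu, rfl⟩) hu
    have hgen : ∀ (g : H i) (u : V), u ∈ U → ρ (Pi.mulSingle i g) u - u ∈ U' := by
      intro g u hu
      refine le_iSup (fun g => U.map (ρ (Pi.mulSingle i g) - 1)) g ?_
      exact ⟨u, hu, by simp⟩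
    have hU'inv : ∀ g : H i, U'.map (ρ (Pi.mulSingle i g)) ≤ U' := by
      intro h
      rw [hU', Submodule.map_iSup]
      refine iSup_le fun g => ?_
      rintro x ⟨y, ⟨u, hu, rfl⟩, rfl⟩
      have hcomp : ρ (Pi.mulSingle i h) ((ρ (Pi.mulSingle i g) - 1) u)
          = (ρ (Pi.mulSingle i (h * g)) u - u) - (ρ (Pi.mulSingle i h) u - u) := by
        simp only [LinearMap.sub_apply, Module.End.one_apply, map_sub, Pi.mulSingle_mul,
          map_mul, Module.End.mul_apply]
        abel
      rw [hcomp]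
      exact Submodule.sub_mem _ (hgen (h * g) u hu) (hgen h u hu)
    rcases hirr i U' hU'W hU'inv with hbot | htop
    · -- U is pointwise fixed, hence lies in Cw i
      left
      have hfix : ∀ u ∈ U, ∀ g : H i, ρ (Pi.mulSingle i g) u = u := by
        intro u hu g
        have : ρ (Pi.mulSingle i g) u - u ∈ U' := hgen g u hu
        rw [hbot, Submodule.mem_bot] at this
        exact sub_eq_zero.1 this
      -- the fixed subspace of W i is trivial
      set Wf : Submodule F V := W i ⊓ ⨅ g : H i, LinearMap.eqLocus (ρ (Pi.mulSingle i g)) 1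
        with hWf
      have hWfinv : ∀ g : H i, Wf.map (ρ (Pi.mulSingle i g)) ≤ Wf := by
        intro g
        rintro x ⟨u, hu, rfl⟩
        have hfix' : ∀ g' : H i, ρ (Pi.mulSingle i g') u = u := fun g' =>
          (Submodule.mem_iInf _).1 hu.2 g'
        rw [hfix' g]
        exact hu
      have hWfbot : Wf = ⊥ := by
        rcases hirr i Wf inf_le_left hWfinv with h | h
        · exact h
        · exfalso
          obtain ⟨g, v, hv, hne⟩ := hnontriv i
          have : v ∈ Wf := h ▸ hv
          have := (Submodule.mem_iInf _).1 this.2 g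
          exact hne this
      intro u hu
      rw [hmemCw]
      have hw : PW i u ∈ Wf := by
        refine ⟨hPWmem i u, (Submodule.mem_iInf _).2 fun g => ?_⟩
        have hc : u - PW i u ∈ Cw i := by
          rw [hmemCw]; simp [map_sub, hPWid i (PW i u) (hPWmem i u)]
        have h1 : ρ (Pi.mulSingle i g) u - u
            = ρ (Pi.mulSingle i g) (PW i u) - PW i u := by
          conv_lhs => rw [show u = PW i u + (u - PW i u) by abel]
          rw [map_add, hCwfix i g _ hc]
          abel
        have h2 := hfix u hu g
        rw [h2] at h1
        have : ρ (Pi.mulSingle i g) (PW i u) - PW i u = 0 := by rw [← h1]; abel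
        exact sub_eq_zero.1 this
      rw [hWfbot, Submodule.mem_bot] at hw
      exact hw
    · right
      rw [← htop]
      exact hU'U
  -- disjoint families of Q's span disjoint subspaces
  have hQdisjsets : ∀ (S T : Set (Fin ℓ)), (∀ x, x ∈ S → x ∈ T → False) →
      Disjoint (⨆ u ∈ S, Q u) (⨆ u ∈ T, Q u) := by
    intro S T hST
    rw [Submodule.disjoint_def]
    intro x hxS hxT
    have hx0 : ∀ j, PQ j x = 0 := by
      intro j
      by_cases hj : j ∈ S
      · exact soi_proj_eq_zero Q PQ hPQz T j (fun hjT => hST j hj hjT) hxT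
      · exact soi_proj_eq_zero Q PQ hPQz S j hj hxS
    rw [← hPQsum x]
    simp [hx0]
  have hVodisj : ∀ t u, ¬ r t u → Disjoint (Vo t) (Vo u) := by
    intro t u h
    exact hQdisjsets _ _ fun x hx hx' => h (hrequiv.trans hx (hrequiv.symm hx'))
  set Ifin : Fin ℓ → Finset (Fin k) :=
    fun t => Finset.univ.filter (fun i => ¬ Vo t ≤ Cw i) with hIfin
  have hWleVo : ∀ t i, i ∈ Ifin t → W i ≤ Vo t := by
    intro t i hi
    have hnle : ¬ Vo t ≤ Cw i := by simpa [hIfin] using hi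
    rcases hdich i (Vo t) (fun g => hVoinv t (Pi.mulSingle i g)) with h | h
    · exact absurd h hnle
    · exact h
  refine soi_counting r hrequiv Ifin ?_ ?_ ?_
  · intro t u h
    ext i
    simp only [hIfin, Finset.mem_filter, Finset.mem_univ, true_and]
    rw [hVor t u h]
  · intro t u h
    rw [Finset.disjoint_left]
    intro i hit hiu
    refine hWne i (le_bot_iff.1 ?_)
    exact (hVodisj t u h) (hWleVo t i hit) (hWleVo u i hiu)
  · intro t₀ Ot hOt
-- ================== per-orbit bound ==================
    have hrt : ∀ t ∈ Ot, ∀ u ∈ Ot, r t u := by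
      intro t ht u hu
      exact hrequiv.trans (hrequiv.symm ((hOt t).1 ht)) ((hOt u).1 hu)
    have ht₀ : t₀ ∈ Ot := (hOt t₀).2 (hrequiv.refl t₀)
    have hsin : ∀ t ∈ Ot, ∀ m, s m t ∈ Ot := by
      intro t ht m
      exact (hOt _).2 (hrequiv.trans ((hOt t).1 ht) ⟨m, rfl⟩)
    have hsets : {u | u ∈ Ot} = {u | r t₀ u} := Set.ext fun u => hOt u
    have hVoOt : Vo t₀ = ⨆ u ∈ {u | u ∈ Ot}, Q u := by
      rw [hVo]; dsimp only; rw [hsets]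
    have hnleI : ∀ i, i ∈ Ifin t₀ → ¬ Vo t₀ ≤ Cw i := by
      intro i hi
      simpa [hIfin] using hi
    have hIne : (Ifin t₀).Nonempty := by
      by_contra hemp
      rw [Finset.not_nonempty_iff_eq_empty] at hemp
      have hall : ∀ i, Vo t₀ ≤ Cw i := by
        intro i
        by_contra hni
        have : i ∈ Ifin t₀ := by simp [hIfin, hni]
        simp [hemp] at this
      refine hQne t₀ ?_
      rw [eq_bot_iff]
      intro v hv
      have hvVo : v ∈ Vo t₀ := hQleVo t₀ t₀ (hrequiv.refl t₀) hv
      have hz : ∀ i, PW i v = 0 := fun i => (hmemCw i v).1 (hall i hvVo)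
      rw [Submodule.mem_bot, ← hPWsum v]
      simp [hz]
    by_cases hcard2 : Ot.card ≤ 1
    · exact le_trans hcard2 (Finset.card_pos.2 hIne)
    push_neg at hcard2
    -- conjugation identity in the product group
    have hconj : ∀ (m : ∀ j, H j) (i : Fin k) (g : H i),
        m * Pi.mulSingle i g * m⁻¹ = Pi.mulSingle i (m i * g * (m i)⁻¹) := by
      intro m i g
      funext j
      by_cases hj : j = i
      · subst hj; simp [Pi.mulSingle_apply]
      · simp [Pi.mulSingle_apply, hj]
    -- W i is never inside a single Q t
    have hWnleQ : ∀ i t, t ∈ Ot → ¬ W i ≤ Q t := by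
      intro i t ht hle
      obtain ⟨u, hu, hne⟩ := Finset.exists_mem_ne hcard2 t
      obtain ⟨m, hm⟩ := hrt t ht u hu
      have hle2 : W i ≤ Q u := by
        rw [← hm, hs, ← hWpres_eq m i]
        exact Submodule.map_mono hle
      have hdisj : Disjoint (Q t) (Q u) :=
        (hQind t).mono_right (le_iSup₂ (f := fun u' (_ : u' ≠ t) => Q u') u hne)
      exact hWne i (le_bot_iff.1 (hdisj hle hle2))
    -- a fixed index with invariant Q t forces Q t ≤ Cw i
    have hQfixle : ∀ i t, t ∈ Ot → (∀ g : H i, s (Pi.mulSingle i g) t = t) → Q t ≤ Cw i := by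
      intro i t ht hfix
      rcases hdich i (Q t)
        (fun g => le_of_eq ((hs _ t).symm.trans (congrArg Q (hfix g)))) with h | h
      · exact h
      · exact absurd h (hWnleQ i t ht)
    have hfix_of_le : ∀ i t, Q t ≤ Cw i → ∀ g : H i, s (Pi.mulSingle i g) t = t := by
      intro i t hle g
      apply hQinj
      rw [hs]
      refine le_antisymm ?_ ?_
      · rintro x ⟨q, hq, rfl⟩
        rw [hCwfix i g q (hle hq)]
        exact hq
      · intro q hq
        exact ⟨q, hq, hCwfix i g q (hle hq)⟩
    have hmoved_ex : ∀ i ∈ Ifin t₀, ∃ t ∈ Ot, ∃ g : H i, s (Pi.mulSingle i g) t ≠ t := by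
      intro i hi
      by_contra hall
      push_neg at hall
      refine hnleI i hi ?_
      rw [hVoOt]
      exact iSup₂_le fun u hu => hQfixle i u hu (hall u hu)
    have hrHmul : ∀ (i : Fin k) (g g' : H i) t, s (Pi.mulSingle i (g * g')) t
        = s (Pi.mulSingle i g) (s (Pi.mulSingle i g') t) := by
      intro i g g' t
      rw [Pi.mulSingle_mul, hsmul]
    have hrHone : ∀ (i : Fin k) t, s (Pi.mulSingle i (1 : H i)) t = t := by
      intro i t; rw [Pi.mulSingle_one, hs1]
    have hrHinv : ∀ (i : Fin k) (g : H i) t,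
        s (Pi.mulSingle i g⁻¹) (s (Pi.mulSingle i g) t) = t := by
      intro i g t; rw [← hrHmul, inv_mul_cancel, hrHone]
    -- every point of the orbit is moved by H i
    have hmovedall : ∀ i ∈ Ifin t₀, ∀ u ∈ Ot, ∃ g : H i, s (Pi.mulSingle i g) u ≠ u := by
      intro i hi u hu
      obtain ⟨tstar, htstar, gstar, hgstar⟩ := hmoved_ex i hi
      obtain ⟨m, hm⟩ := hrt tstar htstar u hu
      refine ⟨m i * gstar * (m i)⁻¹, fun heq => hgstar ?_⟩
      apply hsinj m
      have h1 : s (Pi.mulSingle i (m i * gstar * (m i)⁻¹)) (s m tstar)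
          = s m (s (Pi.mulSingle i gstar) tstar) := by
        rw [← hconj m i gstar, ← hsmul, ← hsmul]
        congr 1
        group
      rw [← hm] at heq
      rw [h1] at heq
      exact heq
    -- each H i with i ∈ Ifin t₀ acts transitively on the orbit
    have atrans : ∀ i ∈ Ifin t₀, ∀ t ∈ Ot, ∀ u ∈ Ot, ∃ g : H i, s (Pi.mulSingle i g) t = u := by
      intro i hi t ht u hu
      have hWleB : ∀ t' ∈ Ot,
          W i ≤ ⨆ u' ∈ {u' | ∃ g : H i, s (Pi.mulSingle i g) t' = u'}, Q u' := by
        intro t' ht'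
        have hBinv : ∀ g : H i,
            (⨆ u' ∈ {u' | ∃ g : H i, s (Pi.mulSingle i g) t' = u'}, Q u').map
              (ρ (Pi.mulSingle i g)) ≤
            ⨆ u' ∈ {u' | ∃ g : H i, s (Pi.mulSingle i g) t' = u'}, Q u' := by
          intro g
          rw [Submodule.map_iSup]
          refine iSup_le fun u' => ?_
          rw [Submodule.map_iSup]
          refine iSup_le fun hu' => ?_
          obtain ⟨g', hg'⟩ := hu'
          rw [← hs]
          refine le_iSup₂ (f := fun u'' (_ : u'' ∈ {u' | ∃ g : H i,
            s (Pi.mulSingle i g) t' = u'}) => Q u'') (s (Pi.mulSingle i g) u') ?_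
          exact ⟨g * g', by rw [hrHmul, hg']⟩
        rcases hdich i _ hBinv with h | h
        · exfalso
          have hQle : Q t' ≤ ⨆ u' ∈ {u' | ∃ g : H i, s (Pi.mulSingle i g) t' = u'}, Q u' :=
            le_iSup₂ (f := fun u'' (_ : u'' ∈ {u' | ∃ g : H i,
              s (Pi.mulSingle i g) t' = u'}) => Q u'') t' ⟨1, hrHone i t'⟩
          obtain ⟨g, hg⟩ := hmovedall i hi t' ht'
          exact hg (hfix_of_le i t' (le_trans hQle h) g)
        · exact h
      by_contra hne
      have hdisjsets : ∀ x, x ∈ {u' | ∃ g : H i, s (Pi.mulSingle i g) t = u'} →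
          x ∈ {u' | ∃ g : H i, s (Pi.mulSingle i g) u = u'} → False := by
        rintro x ⟨g1, hg1⟩ ⟨g2, hg2⟩
        refine hne ⟨g2⁻¹ * g1, ?_⟩
        rw [hrHmul, hg1, ← hg2, hrHinv]
      have := hQdisjsets _ _ hdisjsets
      exact hWne i (le_bot_iff.1 (this (hWleB t ht) (hWleB u hu)))
-- ============ case distinction on the size of Ifin t₀ ============
    by_cases hI2 : (Ifin t₀).card ≤ 1
    · -- exactly one index: Vo t₀ = W i, contradicting primitivity
      exfalso
      have hIcard : (Ifin t₀).card = 1 :=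
        le_antisymm hI2 (Finset.card_pos.2 hIne)
      obtain ⟨i, hIeq⟩ := Finset.card_eq_one.1 hIcard
      have hiI : i ∈ Ifin t₀ := hIeq ▸ Finset.mem_singleton_self i
      have hVoW : Vo t₀ = W i := by
        refine le_antisymm ?_ (hWleVo t₀ i hiI)
        intro v hv
        have hvz : ∀ j, j ≠ i → PW j v = 0 := by
          intro j hj
          have hle : Vo t₀ ≤ Cw j := by
            by_contra h
            have : j ∈ Ifin t₀ := by simp [hIfin, h]
            rw [hIeq, Finset.mem_singleton] at this
            exact hj this
          exact (hmemCw j v).1 (hle hv)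
        have hsum := hPWsum v
        rw [Finset.sum_eq_single i (fun j _ hj => hvz j hj) (by simp)] at hsum
        rw [← hsum]
        exact hPWmem i v
      refine hprim i ⟨Ot.card, fun x => Q ((Ot.orderIsoOfFin rfl) x), hcard2, ?_, ?_, ?_, ?_⟩
      · intro x; exact hQne _
      · refine iSupIndep.comp hQind ?_
        exact Subtype.val_injective.comp (Ot.orderIsoOfFin rfl).injective
      · rw [← hVoW, hVoOt]
        refine le_antisymm ?_ ?_
        · refine iSup_le fun x => ?_
          exact le_iSup₂ (f := fun u (_ : u ∈ {u | u ∈ Ot}) => Q u)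
            ((Ot.orderIsoOfFin rfl) x : Fin ℓ) ((Ot.orderIsoOfFin rfl) x).2
        · refine iSup₂_le fun u hu => ?_
          refine le_iSup_of_le ((Ot.orderIsoOfFin rfl).symm ⟨u, hu⟩) (le_of_eq ?_)
          exact (congrArg (fun z : {x // x ∈ Ot} => Q z.val)
            ((Ot.orderIsoOfFin rfl).apply_symm_apply ⟨u, hu⟩)).symm
      · intro g x
        rw [← hs]
        have hmem : s (Pi.mulSingle i g) ((Ot.orderIsoOfFin rfl) x) ∈ Ot :=
          hsin _ ((Ot.orderIsoOfFin rfl) x).2 _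
        refine ⟨(Ot.orderIsoOfFin rfl).symm ⟨_, hmem⟩, ?_⟩
        exact congrArg (fun z : {x // x ∈ Ot} => Q z.val)
          ((Ot.orderIsoOfFin rfl).apply_symm_apply ⟨_, hmem⟩)
    · -- at least two indices
      push_neg at hI2
      obtain ⟨i₁, hi₁, i₂, hi₂, hi12⟩ := Finset.one_lt_card.1 hI2
      -- choose, for every i ∈ Ifin t₀, another element of Ifin t₀
      have hother : ∀ i ∈ Ifin t₀, ∃ j ∈ Ifin t₀, j ≠ i := by
        intro i hi
        rcases eq_or_ne i i₁ with hh | hh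
        · exact ⟨i₂, hi₂, by rw [hh]; exact fun h => hi12 h.symm⟩
        · exact ⟨i₁, hi₁, fun h => hh h.symm⟩
      -- (K1) vectors in both Q t and Cw i vanish
      have hQCwz : ∀ i ∈ Ifin t₀, ∀ t ∈ Ot, ∀ v ∈ Q t, v ∈ Cw i → v = 0 := by
        intro i hi t ht v hvQ hvC
        obtain ⟨u, hu, hne⟩ := Finset.exists_mem_ne hcard2 t
        obtain ⟨g, hg⟩ := atrans i hi t ht u hu
        have hvu : v ∈ Q u := by
          rw [← hg, ← hCwfix i g v hvC]
          exact (le_of_eq (hs _ t).symm) ⟨v, hvQ, rfl⟩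
        have hdisj : Disjoint (Q t) (Q u) :=
          (hQind t).mono_right (le_iSup₂ (f := fun u' (_ : u' ≠ t) => Q u') u hne)
        exact (Submodule.mem_bot F).1 (hdisj.le_bot ⟨hvQ, hvu⟩)
      -- (K2) vectors in both W i and Q t vanish
      have hWQz : ∀ i ∈ Ifin t₀, ∀ t ∈ Ot, ∀ v ∈ W i, v ∈ Q t → v = 0 := by
        intro i hi t ht v hvW hvQ
        obtain ⟨j, hj, hji⟩ := hother i hi
        have hvC : v ∈ Cw j :=
          le_iSup₂ (f := fun j' (_ : j' ∈ {j' | j' ≠ j}) => W j') i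
            (Ne.symm hji) hvW
        exact hQCwz j hj t ht v hvQ hvC
      -- (K3) PW i maps each Q t onto W i
      have hAeq : ∀ i ∈ Ifin t₀, ∀ t ∈ Ot, ∀ u ∈ Ot,
          (Q u).map (PW i) = (Q t).map (PW i) := by
        intro i hi t ht u hu
        obtain ⟨j, hj, hji⟩ := hother i hi
        obtain ⟨g, hg⟩ := atrans j hj t ht u hu
        have hone : (Pi.mulSingle j g) i = 1 := Pi.mulSingle_eq_of_ne hji.symm g
        have hcomp : PW i ∘ₗ (ρ (Pi.mulSingle j g) : V →ₗ[F] V) = PW i :=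
          LinearMap.ext fun v => hPWrho i _ hone v
        rw [← hg, hs, ← Submodule.map_comp, hcomp]
      have hAW : ∀ i ∈ Ifin t₀, ∀ t ∈ Ot, (Q t).map (PW i) = W i := by
        intro i hi t ht
        refine (hirr i ((Q t).map (PW i)) ?_ ?_).resolve_left ?_
        · rintro x ⟨q, hq, rfl⟩; exact hPWmem i q
        · intro g
          have hcomm : (ρ (Pi.mulSingle i g) : V →ₗ[F] V) ∘ₗ PW i
              = PW i ∘ₗ (ρ (Pi.mulSingle i g) : V →ₗ[F] V) :=
            LinearMap.ext fun v => (hPWcomm i g v).symm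
          rw [← Submodule.map_comp, hcomm, Submodule.map_comp, ← hs]
          rw [hAeq i hi t ht _ (hsin t ht _)]
        · intro hbot
          refine hnleI i hi ?_
          rw [hVoOt]
          refine iSup₂_le fun u hu => ?_
          intro q hq
          rw [hmemCw]
          have : PW i q ∈ (Q u).map (PW i) := ⟨q, hq, rfl⟩
          rw [hAeq i hi t ht u hu, hbot] at this
          exact (Submodule.mem_bot F).1 this
      -- (K4) each W i, i ∈ Ifin t₀, is finite-dimensional
      have hker : ∀ i ∈ Ifin t₀, ∀ g : H i, (∀ t, s (Pi.mulSingle i g) t = t) →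
          ∀ v ∈ W i, ρ (Pi.mulSingle i g) v = v := by
        intro i hi g hfixall v hvW
        have hfixQ : ∀ t ∈ Ot, ∀ q ∈ Q t, ρ (Pi.mulSingle i g) q = q := by
          intro t ht q hq
          have hd : ρ (Pi.mulSingle i g) q - q ∈ W i := hmove i g q
          have hQq : ρ (Pi.mulSingle i g) q ∈ Q t := by
            rw [← hfixall t]
            exact (le_of_eq (hs _ t).symm) ⟨q, hq, rfl⟩
          have hdQ : ρ (Pi.mulSingle i g) q - q ∈ Q t := Submodule.sub_mem _ hQq hq
          have := hWQz i hi t ht _ hd hdQ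
          rw [sub_eq_zero] at this
          exact this
        have hVofix : Vo t₀ ≤ LinearMap.eqLocus (ρ (Pi.mulSingle i g)) 1 := by
          rw [hVoOt]
          exact iSup₂_le fun u hu q hq => hfixQ u hu q hq
        exact hVofix (hWleVo t₀ i hi hvW)
      have hfinW : ∀ i ∈ Ifin t₀, FiniteDimensional F (W i) := by
        intro i hi
        obtain ⟨v₀, hv₀, hv₀ne⟩ := Submodule.ne_bot_iff _ |>.1 (hWne i)
        set c : H i → (Fin ℓ → Fin ℓ) := fun g => s (Pi.mulSingle i g) with hcdef
        have hceq : ∀ g g' : H i, c g = c g' → ∀ v ∈ W i,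
            ρ (Pi.mulSingle i g) v = ρ (Pi.mulSingle i g') v := by
          intro g g' hcc v hv
          have hfixall : ∀ t, s (Pi.mulSingle i (g'⁻¹ * g)) t = t := by
            intro t
            rw [hrHmul]
            have : s (Pi.mulSingle i g) t = s (Pi.mulSingle i g') t :=
              congrFun hcc t
            rw [this, hrHinv]
          have hgg := hker i hi (g'⁻¹ * g) hfixall v hv
          have hdec : Pi.mulSingle i g = Pi.mulSingle i g' * Pi.mulSingle i (g'⁻¹ * g) := by
            rw [← Pi.mulSingle_mul]
            congr 1
            group
          rw [hdec, map_mul, Module.End.mul_apply, hgg]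
        set Sp : Set V := Set.range (fun g : H i => ρ (Pi.mulSingle i g) v₀) with hSp
        have hrep : Sp.Finite := by
          refine Set.Finite.subset (Set.finite_range (fun f : Fin ℓ → Fin ℓ =>
            if h : ∃ g : H i, c g = f then ρ (Pi.mulSingle i h.choose) v₀ else 0)) ?_
          rintro x ⟨g, rfl⟩
          refine ⟨c g, ?_⟩
          dsimp only
          have hex : ∃ g' : H i, c g' = c g := ⟨g, rfl⟩
          rw [dif_pos hex]
          exact hceq hex.choose g hex.choose_spec v₀ hv₀
        have hspan : Submodule.span F Sp = W i := by
          refine (hirr i (Submodule.span F Sp) ?_ ?_).resolve_left ?_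
          · rw [Submodule.span_le]
            rintro x ⟨g, rfl⟩
            exact hinv i g ⟨v₀, hv₀, rfl⟩
          · intro g
            rw [Submodule.map_span]
            refine Submodule.span_mono ?_
            rintro x ⟨y, ⟨g', rfl⟩, rfl⟩
            refine ⟨g * g', ?_⟩
            dsimp only
            rw [Pi.mulSingle_mul, map_mul, Module.End.mul_apply]
          · intro hbot
            refine hv₀ne ?_
            have hv₀Sp : v₀ ∈ Sp := ⟨1, by
              show ρ (Pi.mulSingle i (1 : H i)) v₀ = v₀
              rw [Pi.mulSingle_one, map_one, Module.End.one_apply]⟩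
            have := Submodule.subset_span (R := F) hv₀Sp
            rw [hbot] at this
            simpa using this
        rw [← hspan]
        exact FiniteDimensional.span_of_finite F hrep
      -- (K5) each Q t is isomorphic to each W i
      have hQWiso : ∀ i ∈ Ifin t₀, ∀ t ∈ Ot, Nonempty (↥(Q t) ≃ₗ[F] ↥(W i)) := by
        intro i hi t ht
        set f : ↥(Q t) →ₗ[F] V := PW i ∘ₗ (Q t).subtype with hf
        have hinj : Function.Injective f := by
          rw [← LinearMap.ker_eq_bot]
          rw [eq_bot_iff]
          rintro ⟨q, hq⟩ hker0
          have h0 : PW i q = 0 := hker0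
          have : q ∈ Cw i := (hmemCw i q).2 h0
          have := hQCwz i hi t ht q hq this
          simpa [Submodule.mk_eq_zero] using this
        have hrange : LinearMap.range f = W i := by
          rw [hf, LinearMap.range_comp, Submodule.range_subtype]
          exact hAW i hi t ht
        exact ⟨(LinearEquiv.ofInjective f hinj).trans (LinearEquiv.ofEq _ _ hrange)⟩
      have hfinQ : ∀ t ∈ Ot, FiniteDimensional F (Q t) := by
        intro t ht
        obtain ⟨eqv⟩ := hQWiso i₁ hi₁ t ht
        haveI := hfinW i₁ hi₁
        exact Module.Finite.equiv eqv.symm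
      -- (K6) all the relevant finranks agree
      set d : ℕ := finrank F (Q t₀) with hd
      have hdQ : ∀ t ∈ Ot, finrank F (Q t) = d := by
        intro t ht
        obtain ⟨e1⟩ := hQWiso i₁ hi₁ t ht
        obtain ⟨e2⟩ := hQWiso i₁ hi₁ t₀ ht₀
        rw [hd, e1.finrank_eq, e2.finrank_eq]
      have hdW : ∀ i ∈ Ifin t₀, finrank F (W i) = d := by
        intro i hi
        obtain ⟨e1⟩ := hQWiso i hi t₀ ht₀
        rw [hd, e1.finrank_eq]
      have hdpos : 0 < d := by
        haveI := hfinQ t₀ ht₀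
        rcases Nat.eq_zero_or_pos d with h0 | h
        · rw [hd] at h0
          exact absurd (Submodule.finrank_eq_zero.1 h0) (hQne t₀)
        · exact h
      -- (K7) computing the dimension of Vo t₀ in two ways
      have hVoI : Vo t₀ = ⨆ i ∈ Ifin t₀, W i := by
        refine le_antisymm ?_ (iSup₂_le fun i hi => hWleVo t₀ i hi)
        intro v hv
        rw [← hPWsum v]
        refine Submodule.sum_mem _ fun j _ => ?_
        by_cases hj : j ∈ Ifin t₀
        · exact le_iSup₂ (f := fun j' (_ : j' ∈ Ifin t₀) => W j') j hj (hPWmem j v)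
        · have hle : Vo t₀ ≤ Cw j := by
            by_contra h
            exact hj (by simp [hIfin, h])
          rw [(hmemCw j v).1 (hle hv)]
          exact Submodule.zero_mem _
      have hVoFin : Vo t₀ = ⨆ u ∈ Ot, Q u := hVoOt
      obtain ⟨hfd1, hsum1⟩ := soi_finrank_biSup Q hQind Ot hfinQ
      obtain ⟨hfd2, hsum2⟩ := soi_finrank_biSup W hWind (Ifin t₀) hfinW
      have hQsum : finrank F ↥(⨆ u ∈ Ot, Q u) = Ot.card * d := by
        rw [hsum1, Finset.sum_congr rfl hdQ, Finset.sum_const, smul_eq_mul]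
      have hWsum : finrank F ↥(⨆ i ∈ Ifin t₀, W i) = (Ifin t₀).card * d := by
        rw [hsum2, Finset.sum_congr rfl hdW, Finset.sum_const, smul_eq_mul]
      have hkey : Ot.card * d = (Ifin t₀).card * d := by
        rw [← hQsum, ← hWsum, ← hVoFin, ← hVoI]
      exact le_of_eq (Nat.eq_of_mul_eq_mul_right hdpos hkey)
end

section
/- Let n be even, char F ≠ 2, H = {±1} ≤ GL₁(F), and let K ≤ S_n be a transitive subgroup preserving the partition {{1,2},{3,4},…,{n−1,n}}. Let G = H ≀ K ≤ GL_n(F) act on F^n with standard basis e₁,…,e_n. Then the decomposition F^n = ⟨e₁+e₂⟩ ⊕ ⟨e₁−e₂⟩ ⊕ ⋯ ⊕ ⟨e_{n−1}+e_n⟩ ⊕ ⟨e_{n−1}−e_n⟩ is a system of imprimitivity for G distinct from {⟨e₁⟩,…,⟨e_n⟩}. -/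
/-- The element of `GL(ι → W)` acting as `h` on coordinate `i` and trivially elsewhere. -/
noncomputable def blockGL (F : Type*) [Field F] {ι : Type*} [DecidableEq ι] {W : Type*}
    [AddCommGroup W] [Module F W] (i : ι) (h : LinearMap.GeneralLinearGroup F W) :
    LinearMap.GeneralLinearGroup F (ι → W) :=
  (LinearMap.GeneralLinearGroup.generalLinearEquiv F (ι → W)).symm
    (LinearEquiv.piCongrRight fun j =>
      if j = i then LinearMap.GeneralLinearGroup.generalLinearEquiv F W h
      else LinearEquiv.refl F W)

/-- The element of `GL(ι → W)` permuting the coordinates according to `π`. -/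
noncomputable def permGL (F : Type*) [Field F] {ι : Type*} {W : Type*}
    [AddCommGroup W] [Module F W] (π : Equiv.Perm ι) :
    LinearMap.GeneralLinearGroup F (ι → W) :=
  (LinearMap.GeneralLinearGroup.generalLinearEquiv F (ι → W)).symm
    (LinearEquiv.piCongrLeft' F (fun _ => W) π)

/-- The wreath product `H ≀ K` as a subgroup of `GL(ι → W)`. -/
noncomputable def wreath (F : Type*) [Field F] {ι : Type*} [DecidableEq ι] {W : Type*}
    [AddCommGroup W] [Module F W] (H : Subgroup (LinearMap.GeneralLinearGroup F W))
    (K : Subgroup (Equiv.Perm ι)) : Subgroup (LinearMap.GeneralLinearGroup F (ι → W)) :=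
  Subgroup.closure ({g | ∃ i h, h ∈ H ∧ g = blockGL F i h} ∪ {g | ∃ π ∈ K, g = permGL F π})

/-- `G` permutes the family `Z` of subspaces. -/
def Permutes (F : Type*) [Field F] {V : Type*} [AddCommGroup V] [Module F V]
    (G : Subgroup (LinearMap.GeneralLinearGroup F V)) {ι : Type*}
    (Z : ι → Submodule F V) : Prop :=
  ∀ g ∈ G, ∀ t, (Z t).map ((g : (V →ₗ[F] V)ˣ) : V →ₗ[F] V) ∈ Set.range Z

/-- `Z` is a decomposition of `V` into nonzero subspaces permuted by `G`; together with the
requirement that the index type has more than one element, this is a system of imprimitivity. -/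
def IsSystemOfImprimitivity (F : Type*) [Field F] {V : Type*} [AddCommGroup V] [Module F V]
    (G : Subgroup (LinearMap.GeneralLinearGroup F V)) {ι : Type*} [DecidableEq ι]
    (Z : ι → Submodule F V) : Prop :=
  (∀ t, Z t ≠ ⊥) ∧ DirectSum.IsInternal Z ∧ Permutes F G Z

/-- `G` acts irreducibly on `V`. -/
def IrreducibleOn (F : Type*) [Field F] {V : Type*} [AddCommGroup V] [Module F V]
    (G : Subgroup (LinearMap.GeneralLinearGroup F V)) : Prop :=
  ∀ U : Submodule F V, (∀ g ∈ G, U.map ((g : (V →ₗ[F] V)ˣ) : V →ₗ[F] V) ≤ U) → U = ⊥ ∨ U = ⊤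

/-- `G` acts primitively on `V`: there is no system of imprimitivity. -/
def PrimitiveOn (F : Type*) [Field F] {V : Type*} [AddCommGroup V] [Module F V]
    (G : Subgroup (LinearMap.GeneralLinearGroup F V)) : Prop :=
  ¬ ∃ (ℓ : ℕ) (Z : Fin ℓ → Submodule F V), 1 < ℓ ∧ IsSystemOfImprimitivity F G Z

/-- The element `-1` of `GL₁(F) = GL(F)`. -/
noncomputable def negGL (F : Type*) [Field F] : LinearMap.GeneralLinearGroup F F :=
  ⟨-LinearMap.id, -LinearMap.id, by ext; simp [Module.End.mul_apply], by ext; simp [Module.End.mul_apply]⟩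

/-- The standard basis vector `eᵢ` of `F^n`. -/
def stdVec (F : Type*) [Field F] (n : ℕ) (i : Fin n) : Fin n → F := Pi.single i 1

section Aux

variable {F : Type*} [Field F]

lemma glSymm_coe {ι : Type*} {W : Type*} [AddCommGroup W] [Module F W]
    (E : (ι → W) ≃ₗ[F] (ι → W)) :
    (((LinearMap.GeneralLinearGroup.generalLinearEquiv F (ι → W)).symm E :
      ((ι → W) →ₗ[F] (ι → W))ˣ) : (ι → W) →ₗ[F] (ι → W)) = E := rfl

lemma blockGL_apply {ι : Type*} [DecidableEq ι] {W : Type*} [AddCommGroup W] [Module F W]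
    (i : ι) (h : LinearMap.GeneralLinearGroup F W) (x : ι → W) (j : ι) :
    (((blockGL F i h : ((ι → W) →ₗ[F] (ι → W))ˣ) : (ι → W) →ₗ[F] (ι → W)) x) j
      = if j = i then (h : W →ₗ[F] W) (x j) else x j := by
  rw [blockGL, glSymm_coe]
  simp only [LinearEquiv.coe_coe, LinearEquiv.piCongrRight_apply]
  split <;> simp

lemma permGL_apply {ι : Type*} {W : Type*} [AddCommGroup W] [Module F W]
    (π : Equiv.Perm ι) (x : ι → W) (j : ι) :
    (((permGL F π : ((ι → W) →ₗ[F] (ι → W))ˣ) : (ι → W) →ₗ[F] (ι → W)) x) j = x (π.symm j) := by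
  rw [permGL, glSymm_coe]
  simp

/-- The vector `e_{2t} ± e_{2t+1}`. -/
def vv (F : Type*) [Field F] (m : ℕ) (p : Fin m × Bool) : Fin (2 * m) → F :=
  stdVec F (2 * m) ⟨2 * p.1.val, by have := p.1.isLt; omega⟩ +
    (if p.2 then (-1 : F) else 1) • stdVec F (2 * m) ⟨2 * p.1.val + 1, by have := p.1.isLt; omega⟩

/-- The family of lines spanned by the `vv`. -/
def ZZ (F : Type*) [Field F] (m : ℕ) : Fin m × Bool → Submodule F (Fin (2 * m) → F) :=
  fun p => Submodule.span F {vv F m p}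

lemma vv_apply (m : ℕ) (p : Fin m × Bool) (j : Fin (2 * m)) :
    vv F m p j = (if j.val = 2 * p.1.val then 1 else 0) +
      (if p.2 then (-1 : F) else 1) * (if j.val = 2 * p.1.val + 1 then 1 else 0) := by
  simp only [vv, Pi.add_apply, Pi.smul_apply, smul_eq_mul, stdVec, Pi.single_apply, Fin.ext_iff]

lemma vv_linIndep (hchar : (2 : F) ≠ 0) (m : ℕ) : LinearIndependent F (vv F m) := by
  classical
  set Φ : (Fin (2 * m) → F) →ₗ[F] ((Fin m × Bool) → F) :=
    LinearMap.pi (fun p : Fin m × Bool =>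
      LinearMap.proj (⟨2 * p.1.val, by have := p.1.isLt; omega⟩ : Fin (2 * m)) +
        (if p.2 then (-1 : F) else 1) • LinearMap.proj (⟨2 * p.1.val + 1, by have := p.1.isLt; omega⟩ : Fin (2 * m)))
    with hΦ
  apply LinearIndependent.of_comp Φ
  have hcomp : ⇑Φ ∘ vv F m = fun q : Fin m × Bool =>
      (2 : F) • (Pi.single q (1 : F) : (Fin m × Bool) → F) := by
    funext q p
    simp only [Function.comp_apply, hΦ, LinearMap.pi_apply, LinearMap.add_apply,
      LinearMap.smul_apply, LinearMap.proj_apply, smul_eq_mul, Pi.smul_apply,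
      Pi.single_apply, vv_apply]
    obtain ⟨p1, p2⟩ := p
    obtain ⟨q1, q2⟩ := q
    simp only [Prod.mk.injEq, Fin.ext_iff]
    cases p2 <;> cases q2 <;> simp <;> split_ifs <;> first | ring1 | (exfalso; omega)
  rw [hcomp]
  have hfe : (fun q : Fin m × Bool => (2 : F) • (Pi.single q (1 : F) : (Fin m × Bool) → F)) =
      (fun _ : Fin m × Bool => Units.mk0 (2 : F) hchar) • ⇑(Pi.basisFun F (Fin m × Bool)) := by
    funext q
    simp [Units.smul_def, Pi.basisFun_apply]
  rw [hfe]
  exact (Pi.basisFun F (Fin m × Bool)).linearIndependent.units_smul _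

lemma vv_isInternal (hchar : (2 : F) ≠ 0) (m : ℕ) (hm : 0 < m) :
    DirectSum.IsInternal (ZZ F m) := by
  have li := vv_linIndep (F := F) hchar m
  have : Nonempty (Fin m × Bool) := ⟨(⟨0, hm⟩, false)⟩
  have hcard : Fintype.card (Fin m × Bool) = Module.finrank F (Fin (2 * m) → F) := by
    simp [Module.finrank_fintype_fun_eq_card]
    ring
  have htop : (⨆ p : Fin m × Bool, Submodule.span F {vv F m p}) = ⊤ := by
    rw [← Submodule.span_range_eq_iSup]
    have := (basisOfLinearIndependentOfCardEqFinrank li hcard).span_eq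
    rwa [coe_basisOfLinearIndependentOfCardEqFinrank] at this
  exact DirectSum.isInternal_submodule_of_iSupIndep_of_iSup_eq_top
    li.iSupIndep_span_singleton htop

lemma pair_eq_cases {α : Type*} {x y u v : α} (hxy : x ≠ y) (h : ({x, y} : Set α) = {u, v}) :
    (x = u ∧ y = v) ∨ (x = v ∧ y = u) := by
  have hx : x ∈ ({u, v} : Set α) := by rw [← h]; exact Set.mem_insert _ _
  have hy : y ∈ ({u, v} : Set α) := by rw [← h]; exact Set.mem_insert_iff.mpr (Or.inr rfl)
  rcases hx with h1 | h1 <;> rcases hy with h2 | h2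
  · exact absurd (h1.trans h2.symm) hxy
  · exact Or.inl ⟨h1, h2⟩
  · exact Or.inr ⟨h1, h2⟩
  · simp only [Set.mem_singleton_iff] at h1 h2
    exact absurd (h1.trans h2.symm) hxy

/-- The subgroup of `GL(V)` permuting a finite family of submodules. -/
def permS (F : Type*) [Field F] {V : Type*} [AddCommGroup V] [Module F V] {ι : Type*}
    [Finite ι] (Z : ι → Submodule F V) : Subgroup ((V →ₗ[F] V)ˣ) where
  carrier := {g | ∀ p, (Z p).map ((g : (V →ₗ[F] V)ˣ) : V →ₗ[F] V) ∈ Set.range Z}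
  one_mem' := by
    intro p
    simp only [Units.val_one, Module.End.one_eq_id, Submodule.map_id]
    exact ⟨p, rfl⟩
  mul_mem' := by
    intro g h hg hh p
    rw [Units.val_mul, Module.End.mul_eq_comp, Submodule.map_comp]
    obtain ⟨q, hq⟩ := hh p
    rw [← hq]
    exact hg q
  inv_mem' := by
    intro g hg
    have hmap1 : Function.Injective ⇑(g : V →ₗ[F] V) := by
      have := (LinearMap.GeneralLinearGroup.generalLinearEquiv F V g).injective
      rwa [LinearMap.GeneralLinearGroup.coeFn_generalLinearEquiv] at this
    haveI : Finite ↥(Set.range Z) := (Set.finite_range Z).to_subtype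
    set φ : Set.range Z → Set.range Z := fun U =>
      ⟨(U : Submodule F V).map (g : V →ₗ[F] V), by
        obtain ⟨p, hp⟩ := U.2
        rw [← hp]; exact hg p⟩ with hφ
    have hinj : Function.Injective φ := by
      intro U U' h
      apply Subtype.ext
      apply Submodule.map_injective_of_injective hmap1
      exact congrArg Subtype.val h
    have hsurj := Finite.injective_iff_surjective.mp hinj
    intro p
    obtain ⟨U, hU⟩ := hsurj ⟨Z p, ⟨p, rfl⟩⟩
    have hU' : (U : Submodule F V).map (g : V →ₗ[F] V) = Z p := congrArg Subtype.val hU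
    have hcomp : ((g⁻¹ : (V →ₗ[F] V)ˣ) : V →ₗ[F] V).comp (g : V →ₗ[F] V) = LinearMap.id := by
      rw [← Module.End.mul_eq_comp, ← Units.val_mul, inv_mul_cancel g, Units.val_one,
        Module.End.one_eq_id]
    rw [← hU', ← Submodule.map_comp, hcomp, Submodule.map_id]
    exact U.2

lemma mem_permS {F : Type*} [Field F] {V : Type*} [AddCommGroup V] [Module F V] {ι : Type*}
    [Finite ι] {Z : ι → Submodule F V} {g : (V →ₗ[F] V)ˣ} :
    g ∈ permS F Z ↔ ∀ p, (Z p).map ((g : (V →ₗ[F] V)ˣ) : V →ₗ[F] V) ∈ Set.range Z :=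
  Iff.rfl

/-- If `g` sends the spanning vector of `ZZ p` to a nonzero multiple of that of `ZZ p'`,
then `g` maps `ZZ p` to a member of the family. -/
lemma span_map_mem {m : ℕ} (g : ((Fin (2 * m) → F) →ₗ[F] (Fin (2 * m) → F))ˣ)
    (p p' : Fin m × Bool) (c : F) (hc : c ≠ 0)
    (hgv : ((g : (Fin (2 * m) → F) →ₗ[F] (Fin (2 * m) → F))) (vv F m p) = c • vv F m p') :
    (ZZ F m p).map (g : (Fin (2 * m) → F) →ₗ[F] (Fin (2 * m) → F)) ∈ Set.range (ZZ F m) := by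
  simp only [ZZ]
  rw [Submodule.map_span, Set.image_singleton, hgv,
    Submodule.span_singleton_smul_eq (isUnit_iff_ne_zero.mpr hc)]
  exact ⟨p', rfl⟩

lemma blockGL_one_mem {m : ℕ} (i : Fin (2 * m)) :
    blockGL F i (1 : (F →ₗ[F] F)ˣ) ∈ permS F (ZZ F m) := by
  rw [mem_permS]
  intro p
  have hid : ((blockGL F i (1 : (F →ₗ[F] F)ˣ) : ((Fin (2 * m) → F) →ₗ[F] (Fin (2 * m) → F))ˣ) :
      (Fin (2 * m) → F) →ₗ[F] (Fin (2 * m) → F)) = LinearMap.id := by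
    apply LinearMap.ext
    intro x
    funext j
    rw [blockGL_apply]
    split <;> simp
  rw [hid, Submodule.map_id]
  exact ⟨p, rfl⟩

lemma blockGL_neg_mem {m : ℕ} (i : Fin (2 * m)) :
    blockGL F i (negGL F) ∈ permS F (ZZ F m) := by
  rw [mem_permS]
  rintro ⟨t, s⟩
  have hneg : ∀ (x : Fin (2 * m) → F) (j : Fin (2 * m)),
      ((blockGL F i (negGL F) : ((Fin (2 * m) → F) →ₗ[F] (Fin (2 * m) → F))ˣ) :
        (Fin (2 * m) → F) →ₗ[F] (Fin (2 * m) → F)) x j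
        = if j = i then -(x j) else x j := by
    intro x j
    rw [blockGL_apply]
    simp [negGL]
  have hnot : (if (!s) = true then (-1 : F) else 1) = -(if s = true then (-1 : F) else 1) := by
    cases s <;> simp
  by_cases h1 : i.val = 2 * t.val
  · refine span_map_mem _ (t, s) (t, !s) (-1) (neg_ne_zero.mpr one_ne_zero) ?_
    funext j
    rw [hneg]
    simp only [vv_apply, hnot, Pi.smul_apply, smul_eq_mul, Fin.ext_iff, h1]
    split_ifs <;> first | ring1 | (exfalso; omega)
  by_cases h2 : i.val = 2 * t.val + 1
  · refine span_map_mem _ (t, s) (t, !s) 1 one_ne_zero ?_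
    funext j
    rw [hneg, one_smul]
    simp only [vv_apply, hnot, Fin.ext_iff, h2]
    split_ifs <;> first | ring1 | (exfalso; omega)
  · refine span_map_mem _ (t, s) (t, s) 1 one_ne_zero ?_
    funext j
    rw [hneg, one_smul]
    simp only [vv_apply, Fin.ext_iff]
    split_ifs <;> first | ring1 | (exfalso; omega)

end Aux

set_option maxHeartbeats 1000000 in
/-- Let `n = 2m` be even, `char F ≠ 2`, `H = {±1} ≤ GL₁(F)` and `K ≤ S_n` transitive and
preserving the partition `{{1,2},…,{n−1,n}}`; let `G = H ≀ K ≤ GL_n(F)` and `e₁,…,e_n` the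
standard basis of `F^n`.  Then `F^n = ⟨e₁+e₂⟩ ⊕ ⟨e₁−e₂⟩ ⊕ ⋯ ⊕ ⟨e_{n−1}+e_n⟩ ⊕ ⟨e_{n−1}−e_n⟩`
is a system of imprimitivity for `G`, distinct from `{⟨e₁⟩,…,⟨e_n⟩}`. -/
theorem alternative_soi_for_sign_wreath (F : Type*) [Field F] (hchar : (2 : F) ≠ 0)
    (m : ℕ) (hm : 0 < m) (K : Subgroup (Equiv.Perm (Fin (2 * m))))
    (hKtrans : ∀ i j : Fin (2 * m), ∃ π ∈ K, π i = j)
    (hKpart : ∀ π ∈ K, ∀ t : Fin m, ∃ t' : Fin m,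
      ({π ⟨2 * t.val, by omega⟩, π ⟨2 * t.val + 1, by omega⟩} : Set (Fin (2 * m))) =
        {⟨2 * t'.val, by omega⟩, ⟨2 * t'.val + 1, by omega⟩}) :
    IsSystemOfImprimitivity F (wreath F (Subgroup.closure {negGL F}) K)
      (fun p : Fin m × Bool =>
        Submodule.span F {stdVec F (2 * m) ⟨2 * p.1.val, by omega⟩ +
          (if p.2 then (-1 : F) else 1) • stdVec F (2 * m) ⟨2 * p.1.val + 1, by omega⟩}) ∧
    Set.range (fun p : Fin m × Bool =>
        Submodule.span F {stdVec F (2 * m) ⟨2 * p.1.val, by omega⟩ +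
          (if p.2 then (-1 : F) else 1) • stdVec F (2 * m) ⟨2 * p.1.val + 1, by omega⟩}) ≠
      Set.range (fun i : Fin (2 * m) => Submodule.span F {stdVec F (2 * m) i}) := by
  classical
  suffices h : IsSystemOfImprimitivity F (wreath F (Subgroup.closure {negGL F}) K) (ZZ F m) ∧
      Set.range (ZZ F m) ≠
        Set.range (fun i : Fin (2 * m) => Submodule.span F {stdVec F (2 * m) i}) by
    exact h
  have hle : wreath F (Subgroup.closure {negGL F}) K ≤ permS F (ZZ F m) := by
    refine (Subgroup.closure_le _).mpr ?_
    rintro x (⟨i, h, hh, rfl⟩ | ⟨π, hπ, rfl⟩)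
    · -- block generators
      have hsq : negGL F * negGL F = 1 := by
        apply Units.ext
        ext x
        simp [negGL, Units.val_mul, Module.End.mul_apply]
      have hcases : h = 1 ∨ h = negGL F := by
        refine Subgroup.closure_induction (fun x hx => Or.inr hx) (Or.inl rfl)
          (fun x y _ _ hx hy => ?_) (fun x _ hx => ?_) hh
        · rcases hx with rfl | rfl <;> rcases hy with rfl | rfl <;> simp [hsq]
        · rcases hx with rfl | rfl
          · simp
          · right; exact inv_eq_of_mul_eq_one_right hsq
      rcases hcases with rfl | rfl
      · exact blockGL_one_mem i
      · exact blockGL_neg_mem i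
    · -- permutation generators
      rw [SetLike.mem_coe, mem_permS]
      rintro ⟨t, s⟩
      obtain ⟨t', hset⟩ := hKpart π hπ t
      have hne : π (⟨2 * t.val, by omega⟩ : Fin (2 * m)) ≠
          π (⟨2 * t.val + 1, by omega⟩ : Fin (2 * m)) := by
        intro h
        have := π.injective h
        rw [Fin.ext_iff] at this
        simp at this
      have hab := pair_eq_cases hne hset
      have e1 : ∀ j : Fin (2 * m), ((π.symm j).val = 2 * t.val) =
          (j = π (⟨2 * t.val, by omega⟩ : Fin (2 * m))) := by
        intro j
        refine propext ⟨fun h => ?_, fun h => ?_⟩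
        · exact (Equiv.symm_apply_eq π).mp (Fin.ext h)
        · rw [h, Equiv.symm_apply_apply]
      have e2 : ∀ j : Fin (2 * m), ((π.symm j).val = 2 * t.val + 1) =
          (j = π (⟨2 * t.val + 1, by omega⟩ : Fin (2 * m))) := by
        intro j
        refine propext ⟨fun h => ?_, fun h => ?_⟩
        · exact (Equiv.symm_apply_eq π).mp (Fin.ext h)
        · rw [h, Equiv.symm_apply_apply]
      have hgv : ((permGL F π : ((Fin (2 * m) → F) →ₗ[F] (Fin (2 * m) → F))ˣ) :
            (Fin (2 * m) → F) →ₗ[F] (Fin (2 * m) → F)) (vv F m (t, s))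
          = fun j => (if j = π (⟨2 * t.val, by omega⟩ : Fin (2 * m)) then (1 : F) else 0) +
              (if s then (-1 : F) else 1) *
                (if j = π (⟨2 * t.val + 1, by omega⟩ : Fin (2 * m)) then 1 else 0) := by
        funext j
        rw [permGL_apply, vv_apply]
        simp only [e1, e2]
      rcases hab with ⟨hpa, hpb⟩ | ⟨hpa, hpb⟩
      · refine span_map_mem _ (t, s) (t', s) 1 one_ne_zero ?_
        rw [hgv, hpa, hpb, one_smul]
        funext j
        simp only [vv_apply, Fin.ext_iff]
      · refine span_map_mem _ (t, s) (t', s) (if s then (-1 : F) else 1)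
          (by cases s <;> simp) ?_
        rw [hgv, hpa, hpb]
        funext j
        simp only [vv_apply, Fin.ext_iff, Pi.smul_apply, smul_eq_mul]
        split_ifs <;> first | ring1 | (exfalso; omega)
  refine ⟨⟨?_, ?_, ?_⟩, ?_⟩
  · -- nonzero
    intro p
    simp only [ZZ, ne_eq, Submodule.span_singleton_eq_bot]
    intro h
    have := congrFun h ⟨2 * p.1.val, by omega⟩
    rw [vv_apply] at this
    simp at this
  · -- internal
    exact vv_isInternal hchar m hm
  · -- permutes
    intro g hg p
    exact (mem_permS.mp (hle hg)) p
  · -- distinct from the standard decomposition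
    intro heq
    have hr : ZZ F m (⟨0, hm⟩, false) ∈
        Set.range (fun i : Fin (2 * m) => Submodule.span F {stdVec F (2 * m) i}) := by
      rw [← heq]
      exact ⟨(⟨0, hm⟩, false), rfl⟩
    obtain ⟨i, hi⟩ := hr
    have hi' : Submodule.span F {stdVec F (2 * m) i} = ZZ F m (⟨0, hm⟩, false) := hi
    have hmem : vv F m (⟨0, hm⟩, false) ∈ Submodule.span F {stdVec F (2 * m) i} := by
      rw [hi']
      exact Submodule.mem_span_singleton_self _
    obtain ⟨c, hc⟩ := Submodule.mem_span_singleton.mp hmem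
    have hv0 : vv F m (⟨0, hm⟩, false) (⟨0, by omega⟩ : Fin (2 * m)) = 1 := by
      rw [vv_apply]
      norm_num
    have hv1 : vv F m (⟨0, hm⟩, false) (⟨1, by omega⟩ : Fin (2 * m)) = 1 := by
      rw [vv_apply]
      norm_num
    have e0 := congrFun hc (⟨0, by omega⟩ : Fin (2 * m))
    have e1 := congrFun hc (⟨1, by omega⟩ : Fin (2 * m))
    rw [hv0] at e0
    rw [hv1] at e1
    simp only [Pi.smul_apply, smul_eq_mul, stdVec, Pi.single_apply] at e0 e1
    by_cases hI : (⟨0, by omega⟩ : Fin (2 * m)) = i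
    · have hI1 : ¬ ((⟨1, by omega⟩ : Fin (2 * m)) = i) := by
        rw [← hI]
        simp [Fin.ext_iff]
      rw [if_neg hI1] at e1
      simp at e1
    · rw [if_neg hI] at e0
      simp at e0
end
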